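/- Let Φ : (ℕ → ℤ) →+ (ℕ → ℤ) be the additive homomorphism defined by Φ(g)(n) = g(n) − 2·g(n+1). Then the cokernel of Φ, namely the quotient group (ℕ → ℤ) ⧸ range Φ, is isomorphic as an abelian group to ℤ₂ ⧸ ℤ, the group of 2-adic integers modulo the image of the canonical inclusion ℤ →+ ℤ₂ (Mathlib's ℤ_[2] and the range of the integer cast homomorphism). -/

import Mathlib

open Finset Filter Topology

namespace Stmt10

noncomputable section

/-- The summand `2^n * g n` in `ℤ_[2]`. -/
def Fa (g : ℕ → ℤ) (n : ℕ) : ℤ_[2] := 2 ^ n * (g n : ℤ_[2])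

lemma norm_two : ‖(2 : ℤ_[2])‖ = (1/2 : ℝ) := by
  have := PadicInt.norm_p (p := 2)
  norm_num at this
  simpa using this

lemma norm_two_pow (n : ℕ) : ‖(2 : ℤ_[2]) ^ n‖ = (1/2 : ℝ) ^ n := by
  rw [norm_pow, norm_two]

lemma norm_Fa (g : ℕ → ℤ) (n : ℕ) : ‖Fa g n‖ ≤ (1/2 : ℝ) ^ n := by
  calc ‖Fa g n‖ ≤ ‖(2 : ℤ_[2]) ^ n‖ * ‖((g n : ℤ_[2]))‖ := norm_mul_le _ _
    _ ≤ (1/2 : ℝ) ^ n * 1 := by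
        rw [norm_two_pow]
        gcongr
        exact PadicInt.norm_le_one _
    _ = (1/2 : ℝ) ^ n := mul_one _

lemma summable_Fa (g : ℕ → ℤ) : Summable (Fa g) :=
  Summable.of_norm_bounded (summable_geometric_of_lt_one (by norm_num) (by norm_num))
    (norm_Fa g)

/-- `ψ g = ∑ 2^n g n` as an additive hom. -/
def psi : (ℕ → ℤ) →+ ℤ_[2] :=
  AddMonoidHom.mk' (fun g => ∑' n, Fa g n) (by
    intro a b
    show (∑' n, Fa (a + b) n) = (∑' n, Fa a n) + ∑' n, Fa b n
    have : ∀ n, Fa (a + b) n = Fa a n + Fa b n := by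
      intro n
      simp [Fa, Pi.add_apply]
      ring
    rw [tsum_congr this, Summable.tsum_add (summable_Fa a) (summable_Fa b)])

lemma psi_apply (g : ℕ → ℤ) : psi g = ∑' n, Fa g n := rfl

/-- Integer partial sums. -/
def Sz (g : ℕ → ℤ) (n : ℕ) : ℤ := ∑ i ∈ range n, 2 ^ i * g i

lemma cast_Sz (g : ℕ → ℤ) (n : ℕ) :
    ((Sz g n : ℤ) : ℤ_[2]) = ∑ i ∈ range n, Fa g i := by
  simp only [Sz, Fa]
  push_cast
  rfl

/-- Tail estimate: the partial sums approximate `ψ g` to within `2⁻ⁿ`. -/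
lemma norm_psi_sub_Sz (g : ℕ → ℤ) (n : ℕ) :
    ‖psi g - ((Sz g n : ℤ) : ℤ_[2])‖ ≤ (1/2 : ℝ) ^ n := by
  have hsum := summable_Fa g
  have h := Summable.sum_add_tsum_nat_add n hsum
  have htail : psi g - ((Sz g n : ℤ) : ℤ_[2]) = ∑' k, Fa g (k + n) := by
    rw [cast_Sz, psi_apply, sub_eq_iff_eq_add']
    exact h.symm
  rw [htail]
  have hfac : ∀ k, Fa g (k + n) = (2 : ℤ_[2]) ^ n * ((2 : ℤ_[2]) ^ k * (g (k + n) : ℤ_[2])) := by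
    intro k
    simp [Fa, pow_add]
    ring
  rw [tsum_congr hfac, Summable.tsum_mul_left]
  · calc ‖(2 : ℤ_[2]) ^ n * ∑' k, (2 : ℤ_[2]) ^ k * (g (k + n) : ℤ_[2])‖
        ≤ ‖(2 : ℤ_[2]) ^ n‖ * ‖∑' k, (2 : ℤ_[2]) ^ k * (g (k + n) : ℤ_[2])‖ := norm_mul_le _ _
      _ ≤ (1/2 : ℝ) ^ n * 1 := by
          rw [norm_two_pow]
          gcongr
          exact PadicInt.norm_le_one _
      _ = (1/2 : ℝ) ^ n := mul_one _
  · exact summable_Fa (fun m => g (m + n))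

lemma tendsto_pow_half : Tendsto (fun n : ℕ => ((1:ℝ)/2) ^ n) atTop (𝓝 0) :=
  tendsto_pow_atTop_nhds_zero_of_lt_one (by norm_num) (by norm_num)

/-- `ψ (Φ g) = g 0`. -/
lemma psi_Phi (Φ : (ℕ → ℤ) →+ (ℕ → ℤ))
    (hΦ : ∀ (g : ℕ → ℤ) (n : ℕ), Φ g n = g n - 2 * g (n + 1))
    (g : ℕ → ℤ) : psi (Φ g) = ((g 0 : ℤ) : ℤ_[2]) := by
  set f : ℕ → ℤ_[2] := fun i => 2 ^ i * (g i : ℤ_[2]) with hf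
  have hterm : ∀ i, Fa (Φ g) i = f i - f (i + 1) := by
    intro i
    simp only [Fa, hΦ g i, hf]
    push_cast
    ring
  have h1 : Tendsto (fun N => ∑ i ∈ range N, Fa (Φ g) i) atTop (𝓝 (psi (Φ g))) :=
    (summable_Fa (Φ g)).hasSum.tendsto_sum_nat
  have h2 : ∀ N, ∑ i ∈ range N, Fa (Φ g) i = f 0 - f N := by
    intro N
    rw [Finset.sum_congr rfl (fun i _ => hterm i), Finset.sum_range_sub' f N]
  have hfz : Tendsto (fun N => f N) atTop (𝓝 0) := by
    rw [tendsto_zero_iff_norm_tendsto_zero]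
    apply squeeze_zero (fun n => norm_nonneg _) _ tendsto_pow_half
    intro n
    calc ‖f n‖ ≤ ‖(2 : ℤ_[2]) ^ n‖ * ‖((g n : ℤ_[2]))‖ := norm_mul_le _ _
      _ ≤ (1/2 : ℝ) ^ n * 1 := by
          rw [norm_two_pow]; gcongr
          exact PadicInt.norm_le_one _
      _ = (1/2 : ℝ) ^ n := mul_one _
  have h3 : Tendsto (fun N => ∑ i ∈ range N, Fa (Φ g) i) atTop (𝓝 (f 0 - 0)) := by
    simp only [h2]
    exact Tendsto.sub tendsto_const_nhds hfz
  have := tendsto_nhds_unique h1 h3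
  rw [this]
  simp [hf]

/-- surjectivity of `ψ`. -/
lemma psi_surjective : Function.Surjective psi := by
  intro x
  have hdvd : ∀ n : ℕ, (2:ℤ) ^ n ∣ ((x.appr (n+1) : ℤ) - x.appr n) := by
    intro n
    have h := PadicInt.dvd_appr_sub_appr x n (n+1) (Nat.le_succ n)
    have hmono : x.appr n ≤ x.appr (n+1) := PadicInt.appr_mono x (Nat.le_succ n)
    obtain ⟨c, hc⟩ := h
    refine ⟨(c : ℤ), ?_⟩
    have : (x.appr (n+1) : ℤ) - x.appr n = ((x.appr (n+1) - x.appr n : ℕ) : ℤ) := by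
      omega
    rw [this, hc]
    push_cast
    ring
  set g : ℕ → ℤ := fun n => ((x.appr (n+1) : ℤ) - x.appr n) / 2 ^ n with hg
  have hgn : ∀ n, (2:ℤ) ^ n * g n = (x.appr (n+1) : ℤ) - x.appr n := by
    intro n
    exact Int.mul_ediv_cancel' (hdvd n)
  refine ⟨g, ?_⟩
  have hSz : ∀ N, Sz g N = (x.appr N : ℤ) := by
    intro N
    induction N with
    | zero => simp [Sz, PadicInt.appr]
    | succ n ih =>
        rw [Sz, Finset.sum_range_succ, ← Sz, ih, hgn n]
        ring
  have h1 : Tendsto (fun N => ∑ i ∈ range N, Fa g i) atTop (𝓝 (psi g)) :=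
    (summable_Fa g).hasSum.tendsto_sum_nat
  have h2 : Tendsto (fun N => ∑ i ∈ range N, Fa g i) atTop (𝓝 x) := by
    rw [tendsto_iff_norm_sub_tendsto_zero]
    apply squeeze_zero (fun n => norm_nonneg _) _ tendsto_pow_half
    intro n
    have : ∑ i ∈ range n, Fa g i = ((Sz g n : ℤ) : ℤ_[2]) := (cast_Sz g n).symm
    rw [this, hSz]
    have hb : ‖x - ((x.appr n : ℕ) : ℤ_[2])‖ ≤ ((2:ℕ):ℝ) ^ (-n : ℤ) :=
      (PadicInt.norm_le_pow_iff_mem_span_pow _ n).mpr (PadicInt.appr_spec n x)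
    have hcast : ((x.appr n : ℤ) : ℤ_[2]) = ((x.appr n : ℕ) : ℤ_[2]) := by push_cast; ring
    calc ‖((x.appr n : ℤ) : ℤ_[2]) - x‖ = ‖x - ((x.appr n : ℕ) : ℤ_[2])‖ := by
          rw [hcast, norm_sub_rev]
      _ ≤ ((2:ℕ):ℝ) ^ (-n : ℤ) := hb
      _ = (1/2 : ℝ) ^ n := by
          push_cast
          rw [zpow_neg, zpow_natCast, one_div, inv_pow]
  exact tendsto_nhds_unique h1 h2

/-- kernel characterization. -/
lemma mem_range_of_psi_int (Φ : (ℕ → ℤ) →+ (ℕ → ℤ))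
    (hΦ : ∀ (g : ℕ → ℤ) (n : ℕ), Φ g n = g n - 2 * g (n + 1))
    (g : ℕ → ℤ) (m : ℤ) (hm : psi g = (m : ℤ_[2])) : g ∈ Φ.range := by
  have hdvd : ∀ n : ℕ, (2:ℤ) ^ n ∣ (m - Sz g n) := by
    intro n
    have h1 : ‖((m - Sz g n : ℤ) : ℤ_[2])‖ ≤ (2:ℝ) ^ (-n : ℤ) := by
      have : ((m - Sz g n : ℤ) : ℤ_[2]) = psi g - ((Sz g n : ℤ) : ℤ_[2]) := by
        rw [hm]; push_cast; ring
      rw [this]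
      calc ‖psi g - ((Sz g n : ℤ) : ℤ_[2])‖ ≤ (1/2 : ℝ) ^ n := norm_psi_sub_Sz g n
        _ = (2:ℝ) ^ (-n : ℤ) := by
            rw [zpow_neg, zpow_natCast, one_div, inv_pow]
    have h2 := (PadicInt.norm_int_le_pow_iff_dvd (p := 2) (k := m - Sz g n) (n := n)).mp (by
      simpa using h1)
    exact_mod_cast h2
  set c : ℕ → ℤ := fun n => (m - Sz g n) / 2 ^ n with hc
  have hcn : ∀ n, (2:ℤ) ^ n * c n = m - Sz g n := fun n => Int.mul_ediv_cancel' (hdvd n)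
  refine ⟨c, ?_⟩
  funext n
  rw [hΦ c n]
  have h2n : (2:ℤ) ^ n ≠ 0 := by positivity
  apply mul_left_cancel₀ h2n
  have hSsucc : Sz g (n+1) = Sz g n + 2 ^ n * g n := by
    rw [Sz, Finset.sum_range_succ, ← Sz]
  have e1 : (2:ℤ) ^ n * (c n - 2 * c (n+1)) = (2:ℤ)^n * c n - (2:ℤ)^(n+1) * c (n+1) := by ring
  rw [e1, hcn n, hcn (n+1), hSsucc]
  ring

end

end Stmt10

/-- The derived limit `lim¹` of the tower `⋯ →2 ℤ →2 ℤ` (bonding maps are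
multiplication by `2`), i.e. the cokernel of `Φ : (ℕ → ℤ) →+ (ℕ → ℤ)`,
`Φ(g)(n) = g(n) - 2·g(n+1)`, is isomorphic to `ℤ₂/ℤ`, the `2`-adic integers
modulo the image of `ℤ`. -/
theorem stmt_10 (Φ : (ℕ → ℤ) →+ (ℕ → ℤ))
    (hΦ : ∀ (g : ℕ → ℤ) (n : ℕ), Φ g n = g n - 2 * g (n + 1)) :
    Nonempty (((ℕ → ℤ) ⧸ Φ.range) ≃+ (ℤ_[2] ⧸ (Int.castAddHom ℤ_[2]).range)) := by
  classical
  set R := (Int.castAddHom ℤ_[2]).range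
  set π : (ℕ → ℤ) →+ ℤ_[2] ⧸ R := (QuotientAddGroup.mk' R).comp Stmt10.psi with hπ
  have hsurj : Function.Surjective π := by
    intro y
    obtain ⟨x, rfl⟩ := QuotientAddGroup.mk'_surjective R y
    obtain ⟨g, hg⟩ := Stmt10.psi_surjective x
    exact ⟨g, by simp [hπ, hg]⟩
  have hker : π.ker = Φ.range := by
    ext g
    constructor
    · intro hgk
      have : Stmt10.psi g ∈ R := by
        rw [AddMonoidHom.mem_ker] at hgk
        simpa [hπ, QuotientAddGroup.eq_zero_iff] using hgk
      obtain ⟨m, hm⟩ := this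
      exact Stmt10.mem_range_of_psi_int Φ hΦ g m hm.symm
    · rintro ⟨a, rfl⟩
      rw [AddMonoidHom.mem_ker]
      simp only [hπ, AddMonoidHom.comp_apply, QuotientAddGroup.mk'_apply]
      rw [QuotientAddGroup.eq_zero_iff]
      rw [Stmt10.psi_Phi Φ hΦ a]
      exact ⟨a 0, rfl⟩
  exact ⟨(QuotientAddGroup.quotientAddEquivOfEq hker.symm).trans
    (QuotientAddGroup.quotientKerEquivOfSurjective π hsurj)⟩
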